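/- arXiv:1601.03240 — 3 statements merged into one kernel-verified Lean document; each statement's English description precedes it below -/
import Mathlib

section
/- Two prenex pp-formulas φ_1(S_1) and φ_2(S_2) over the same signature are counting equivalent if and only if they are renaming equivalent. -/
structure Signature where
  symb : Type
  ar : symb → ℕ

structure Struc (σ : Signature) where
  carrier : Type
  rel : ∀ r : σ.symb, (Fin (σ.ar r) → carrier) → Prop

def IsHom {σ : Signature} (A B : Struc σ) (h : A.carrier → B.carrier) : Prop :=
  ∀ r t, A.rel r t → B.rel r (h ∘ t)

def ppSet {σ : Signature} (A : Struc σ) (S : Set A.carrier) (B : Struc σ) :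
    Set (S → B.carrier) :=
  {f | ∃ h : A.carrier → B.carrier, IsHom A B h ∧ ∀ s : S, h s = f s}

noncomputable def ppCount {σ : Signature} (A : Struc σ) (S : Set A.carrier)
    (B : Struc σ) : ℕ :=
  Nat.card (ppSet A S B)

def CountEquiv {σ : Signature} (A₁ : Struc σ) (S₁ : Set A₁.carrier)
    (A₂ : Struc σ) (S₂ : Set A₂.carrier) : Prop :=
  ∀ B : Struc σ, Finite B.carrier → ppCount A₁ S₁ B = ppCount A₂ S₂ B

def SemiCountEquiv {σ : Signature} (A₁ : Struc σ) (S₁ : Set A₁.carrier)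
    (A₂ : Struc σ) (S₂ : Set A₂.carrier) : Prop :=
  ∀ B : Struc σ, Finite B.carrier → 0 < ppCount A₁ S₁ B → 0 < ppCount A₂ S₂ B →
    ppCount A₁ S₁ B = ppCount A₂ S₂ B

def ppGraph {σ : Signature} (A : Struc σ) : SimpleGraph A.carrier where
  Adj x y := x ≠ y ∧ ∃ r t, A.rel r t ∧ (∃ i, t i = x) ∧ (∃ j, t j = y)
  symm := ⟨by
    rintro x y ⟨hxy, r, t, h, hi, hj⟩
    exact ⟨Ne.symm hxy, r, t, h, hj, hi⟩⟩
  loopless := ⟨by rintro x ⟨h, -⟩; exact h rfl⟩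

def hatStruc {σ : Signature} (A : Struc σ) (S : Set A.carrier) : Struc σ :=
  ⟨A.carrier, fun r t => A.rel r t ∧ ∃ i, ∃ s ∈ S, (ppGraph A).Reachable (t i) s⟩

def compStruc {σ : Signature} (A : Struc σ) (c : (ppGraph A).ConnectedComponent) :
    Struc σ :=
  ⟨{a : A.carrier // (ppGraph A).connectedComponentMk a = c},
   fun r t => A.rel r (fun i => (t i).1)⟩

def prodStruc {σ : Signature} (B C : Struc σ) : Struc σ :=
  ⟨B.carrier × C.carrier,
   fun r t => B.rel r (fun i => (t i).1) ∧ C.rel r (fun i => (t i).2)⟩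

def RenEquiv {σ : Signature} (A₁ : Struc σ) (S₁ : Set A₁.carrier)
    (A₂ : Struc σ) (S₂ : Set A₂.carrier) : Prop :=
  (∃ h : S₁ → S₂, Function.Surjective h ∧
     ∃ H, IsHom A₁ A₂ H ∧ ∀ s : S₁, H s = h s) ∧
  (∃ h' : S₂ → S₁, Function.Surjective h' ∧
     ∃ H, IsHom A₂ A₁ H ∧ ∀ s : S₂, H s = h' s)

open Classical in
noncomputable def blowUp {σ : Signature} (B : Struc σ) (μ : B.carrier → ℕ) : Struc σ :=
  ⟨(b : B.carrier) × Fin (μ b), fun r t => B.rel r fun i => (t i).1⟩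

instance {σ : Signature} (B : Struc σ) (μ : B.carrier → ℕ) [Finite B.carrier] :
    Finite (blowUp B μ).carrier := by
  show Finite ((b : B.carrier) × Fin (μ b)); infer_instance

lemma proj_mem {σ : Signature} {A : Struc σ} {S : Set A.carrier} {B : Struc σ}
    {μ : B.carrier → ℕ} {g : S → (blowUp B μ).carrier}
    (hg : g ∈ ppSet A S (blowUp B μ)) :
    (fun a => (g a).1) ∈ ppSet A S B := by
  obtain ⟨h, hh, hs⟩ := hg
  exact ⟨fun a => (h a).1, fun r t ht => hh r t ht, fun s => congrArg Sigma.fst (hs s)⟩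

lemma lift_mem {σ : Signature} {A : Struc σ} {S : Set A.carrier} {B : Struc σ}
    {μ : B.carrier → ℕ} (hμ : ∀ b, 0 < μ b) {f : S → B.carrier}
    (hf : f ∈ ppSet A S B) (c : ∀ a : S, Fin (μ (f a))) :
    (fun a => (⟨f a, c a⟩ : (blowUp B μ).carrier)) ∈ ppSet A S (blowUp B μ) := by
  classical
  obtain ⟨h, hh, hs⟩ := hf
  refine ⟨fun a => if ha : a ∈ S then ⟨f ⟨a, ha⟩, c ⟨a, ha⟩⟩ else ⟨h a, ⟨0, hμ _⟩⟩, ?_, ?_⟩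
  · intro r t ht
    show B.rel r _
    have : (fun i => ((if ha : t i ∈ S then (⟨f ⟨t i, ha⟩, c ⟨t i, ha⟩⟩ : (blowUp B μ).carrier) else ⟨h (t i), ⟨0, hμ _⟩⟩)).1) = h ∘ t := by
      funext i
      by_cases ha : t i ∈ S
      · simp [ha, (hs ⟨t i, ha⟩).symm]
      · simp [ha]
    exact this ▸ hh r t ht
  · intro s
    exact dif_pos s.2

noncomputable def blowEquiv {σ : Signature} (A : Struc σ) (S : Set A.carrier) (B : Struc σ)
    (μ : B.carrier → ℕ) (hμ : ∀ b, 0 < μ b) :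
    ↥(ppSet A S (blowUp B μ)) ≃ Σ f : ↥(ppSet A S B), ∀ a : S, Fin (μ (f.1 a)) where
  toFun g := ⟨⟨fun a => (g.1 a).1, proj_mem g.2⟩, fun a => (g.1 a).2⟩
  invFun p := ⟨fun a => ⟨p.1.1 a, p.2 a⟩, lift_mem hμ p.1.2 p.2⟩
  left_inv g := rfl
  right_inv p := rfl

lemma ppCount_blowUp {σ : Signature} (A : Struc σ) (S : Set A.carrier) (B : Struc σ)
    (μ : B.carrier → ℕ) (hμ : ∀ b, 0 < μ b)
    [Fintype ↥S] [Fintype ↥(ppSet A S B)] :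
    ppCount A S (blowUp B μ) = ∑ f : ↥(ppSet A S B), ∏ a : ↥S, μ (f.1 a) := by
  classical
  rw [ppCount, Nat.card_congr (blowEquiv A S B μ hμ)]
  rw [Nat.card_eq_fintype_card, Fintype.card_sigma]
  congr 1
  funext f
  rw [Fintype.card_pi]
  simp

lemma top_le {α β : Type*} (s : Finset α) (t : Finset β) (k₁ : α → ℕ) (k₂ : β → ℕ) (n : ℕ)
    (h₁ : ∀ a ∈ s, k₁ a ≤ n)
    (h : ∀ m, 0 < m → ∑ a ∈ s, m ^ k₁ a = ∑ b ∈ t, m ^ k₂ b) :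
    (t.filter fun b => k₂ b = n).card ≤ (s.filter fun a => k₁ a = n).card := by
  classical
  by_contra hc
  push_neg at hc
  set t₁ := (s.filter fun a => k₁ a = n).card with ht1
  set t₂ := (t.filter fun b => k₂ b = n).card with ht2
  -- choose m large
  set m := s.card + 2 with hm
  have hmpos : 0 < m := by omega
  have hub : ∑ a ∈ s, m ^ k₁ a ≤ t₁ * m ^ n + s.card * m ^ (n - 1) := by
    rw [← Finset.sum_filter_add_sum_filter_not s (fun a => k₁ a = n)]
    gcongr
    · rw [Finset.sum_congr rfl (fun a ha => by rw [(Finset.mem_filter.1 ha).2]),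
        Finset.sum_const, smul_eq_mul]
    · calc ∑ a ∈ s.filter (fun a => ¬ k₁ a = n), m ^ k₁ a
          ≤ ∑ _a ∈ s.filter (fun a => ¬ k₁ a = n), m ^ (n-1) := by
            apply Finset.sum_le_sum
            intro a ha
            have := h₁ a (Finset.mem_of_mem_filter a ha)
            have hne := (Finset.mem_filter.1 ha).2
            exact Nat.pow_le_pow_right (by omega) (by omega)
        _ ≤ s.card * m ^ (n-1) := by
            rw [Finset.sum_const, smul_eq_mul]
            have : (s.filter (fun a => ¬ k₁ a = n)).card ≤ s.card := Finset.card_filter_le _ _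
            gcongr
  have hlb : t₂ * m ^ n ≤ ∑ b ∈ t, m ^ k₂ b := by
    calc t₂ * m ^ n = ∑ b ∈ t.filter (fun b => k₂ b = n), m ^ k₂ b := by
          rw [Finset.sum_congr rfl (fun b hb => by rw [(Finset.mem_filter.1 hb).2]),
            Finset.sum_const, smul_eq_mul]
      _ ≤ ∑ b ∈ t, m ^ k₂ b := Finset.sum_le_sum_of_subset (Finset.filter_subset _ _)
  rw [← h m hmpos] at hlb
  have key : (t₁ + 1) * m ^ n ≤ t₁ * m ^ n + s.card * m ^ (n-1) := by
    calc (t₁ + 1) * m ^ n ≤ t₂ * m ^ n := by gcongr; omega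
      _ ≤ _ := le_trans hlb hub
  have hn1 : m ^ n = m * m ^ (n - 1) ∨ n = 0 := by
    rcases Nat.eq_zero_or_pos n with h0 | h0
    · right; exact h0
    · left; rw [← pow_succ']; congr 1; omega
  rcases hn1 with hn1 | hn1
  · rw [add_mul, one_mul] at key
    have : m ^ n ≤ s.card * m ^ (n-1) := by omega
    rw [hn1] at this
    have hp : 0 < m ^ (n-1) := Nat.pow_pos hmpos
    have := Nat.le_of_mul_le_mul_right (by linarith [this] : m * m ^ (n-1) ≤ s.card * m ^ (n-1)) hp
    omega
  · -- n = 0 : then k₂ b = 0 for filtered, sums at m=1 give card equality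
    subst hn1
    have h1 := h 1 one_pos
    simp only [one_pow, Finset.sum_const, smul_eq_mul, mul_one] at h1
    have : t₂ ≤ t.card := Finset.card_filter_le _ _
    have : t₁ ≤ s.card := Finset.card_filter_le _ _
    -- t₂ ≤ t.card = s.card, and t₁ < t₂; also filter k=0 : every k₁ a ≤ 0 so filter = s
    have hs' : (s.filter fun a => k₁ a = 0) = s := by
      apply Finset.filter_true_of_mem
      intro a ha; exact Nat.le_zero.1 (h₁ a ha)
    rw [hs'] at ht1
    omega

lemma ppSet_self_mem {σ : Signature} (A : Struc σ) (S : Set A.carrier) :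
    (fun s : S => (s : A.carrier)) ∈ ppSet A S A :=
  ⟨id, fun r t ht => ht, fun _ => rfl⟩

lemma prod_mu_ite {σ : Signature} {A : Struc σ} {S : Set A.carrier} [Fintype ↥S]
    (T : Finset A.carrier) (m : ℕ) (f : S → A.carrier) [DecidableEq A.carrier] :
    (∏ a : ↥S, (if f a ∈ T then m else 1)) =
      m ^ (Finset.univ.filter fun a : ↥S => f a ∈ T).card := by
  classical
  rw [Finset.prod_ite, Finset.prod_const, Finset.prod_const_one, mul_one]

lemma exists_surj {σ : Signature} (A₁ A₂ : Struc σ)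
    (S₁ : Set A₁.carrier) (S₂ : Set A₂.carrier)
    [Finite A₁.carrier] [Finite A₂.carrier] (CE : CountEquiv A₁ S₁ A₂ S₂) :
    ∃ h : S₁ → S₂, Function.Surjective h ∧
      ∃ H, IsHom A₁ A₂ H ∧ ∀ s : S₁, H s = h s := by
  classical
  letI : Fintype A₂.carrier := Fintype.ofFinite _
  letI : Fintype ↥S₁ := Fintype.ofFinite _
  letI : Fintype ↥S₂ := Fintype.ofFinite _
  letI : Fintype ↥(ppSet A₁ S₁ A₂) := Fintype.ofFinite _
  letI : Fintype ↥(ppSet A₂ S₂ A₂) := Fintype.ofFinite _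
  set n := Fintype.card ↥S₁ with hn
  -- base counts equal and positive
  have hc : Fintype.card ↥(ppSet A₁ S₁ A₂) = Fintype.card ↥(ppSet A₂ S₂ A₂) := by
    have := CE A₂ inferInstance
    rwa [ppCount, ppCount, Nat.card_eq_fintype_card, Nat.card_eq_fintype_card] at this
  have hc2pos : 0 < Fintype.card ↥(ppSet A₂ S₂ A₂) :=
    @Fintype.card_pos _ _ ⟨⟨_, ppSet_self_mem A₂ S₂⟩⟩
  -- blow-up counting identity
  have key : ∀ (T : Finset A₂.carrier) (m : ℕ), 0 < m →
      (∑ f : ↥(ppSet A₁ S₁ A₂),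
        m ^ (Finset.univ.filter fun a : ↥S₁ => f.1 a ∈ T).card) =
      (∑ f : ↥(ppSet A₂ S₂ A₂),
        m ^ (Finset.univ.filter fun a : ↥S₂ => f.1 a ∈ T).card) := by
    intro T m hm
    have hμ : ∀ b : A₂.carrier, 0 < (if b ∈ T then m else 1) := by
      intro b; split <;> omega
    have := CE (blowUp A₂ fun b => if b ∈ T then m else 1) inferInstance
    rw [ppCount_blowUp _ _ _ _ hμ, ppCount_blowUp _ _ _ _ hμ] at this
    simpa only [Finset.prod_ite, Finset.prod_const, Finset.prod_const_one,
      one_pow, mul_one] using this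
  -- |S₁| = |S₂|
  have hcard : Fintype.card ↥S₂ = n := by
    have h2 := key Finset.univ 2 two_pos
    have e1 : ∀ (f : ↥(ppSet A₁ S₁ A₂)),
        (Finset.univ.filter fun a : ↥S₁ => f.1 a ∈ (Finset.univ : Finset A₂.carrier)).card = n := by
      intro f; simp [hn]
    have e2 : ∀ (f : ↥(ppSet A₂ S₂ A₂)),
        (Finset.univ.filter fun a : ↥S₂ => f.1 a ∈ (Finset.univ : Finset A₂.carrier)).card
          = Fintype.card ↥S₂ := by
      intro f; simp
    simp only [e1, e2, Finset.sum_const, Finset.card_univ, smul_eq_mul] at h2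
    rw [hc] at h2
    have := Nat.eq_of_mul_eq_mul_left hc2pos h2
    exact (Nat.pow_right_injective (le_refl 2) this.symm)
  -- N(T) : number of partial homs landing inside T, equal on both sides
  have hN : ∀ T : Finset A₂.carrier,
      (Finset.univ.filter fun f : ↥(ppSet A₁ S₁ A₂) => ∀ a : ↥S₁, f.1 a ∈ T).card =
      (Finset.univ.filter fun f : ↥(ppSet A₂ S₂ A₂) => ∀ a : ↥S₂, f.1 a ∈ T).card := by
    intro T
    have b₁ : ∀ f : ↥(ppSet A₁ S₁ A₂),
        (Finset.univ.filter fun a : ↥S₁ => f.1 a ∈ T).card ≤ n :=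
      fun f => le_trans (Finset.card_filter_le _ _) (by simp [hn])
    have b₂ : ∀ f : ↥(ppSet A₂ S₂ A₂),
        (Finset.univ.filter fun a : ↥S₂ => f.1 a ∈ T).card ≤ n :=
      fun f => le_trans (Finset.card_filter_le _ _) (by simp [hcard])
    have h₁ := top_le Finset.univ Finset.univ _ _ n (fun f _ => b₁ f) (key T)
    have h₂ := top_le Finset.univ Finset.univ _ _ n (fun f _ => b₂ f)
      (fun m hm => (key T m hm).symm)
    have conv₁ : ∀ f : ↥(ppSet A₁ S₁ A₂),
        ((Finset.univ.filter fun a : ↥S₁ => f.1 a ∈ T).card = n) = (∀ a : ↥S₁, f.1 a ∈ T) := by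
      intro f
      ext
      constructor
      · intro hcf a
        have huniv : (Finset.univ.filter fun a : ↥S₁ => f.1 a ∈ T) = Finset.univ :=
          Finset.eq_univ_of_card _ (by rw [hcf, hn])
        have : a ∈ (Finset.univ.filter fun a : ↥S₁ => f.1 a ∈ T) := by
          rw [huniv]; exact Finset.mem_univ a
        exact (Finset.mem_filter.1 this).2
      · intro hall
        rw [Finset.filter_true_of_mem (fun a _ => hall a), Finset.card_univ, hn]
    have conv₂ : ∀ f : ↥(ppSet A₂ S₂ A₂),
        ((Finset.univ.filter fun a : ↥S₂ => f.1 a ∈ T).card = n) = (∀ a : ↥S₂, f.1 a ∈ T) := by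
      intro f
      ext
      constructor
      · intro hcf a
        have huniv : (Finset.univ.filter fun a : ↥S₂ => f.1 a ∈ T) = Finset.univ :=
          Finset.eq_univ_of_card _ (by rw [hcf, hcard])
        have : a ∈ (Finset.univ.filter fun a : ↥S₂ => f.1 a ∈ T) := by
          rw [huniv]; exact Finset.mem_univ a
        exact (Finset.mem_filter.1 this).2
      · intro hall
        rw [Finset.filter_true_of_mem (fun a _ => hall a), Finset.card_univ, hcard]
    rw [Finset.filter_congr (fun f _ => iff_of_eq (conv₁ f).symm),
        Finset.filter_congr (fun f _ => iff_of_eq (conv₂ f).symm)]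
    exact le_antisymm h₂ h₁
  -- E(T) : number of partial homs with image exactly T
  have hE : ∀ T : Finset A₂.carrier,
      (Finset.univ.filter fun f : ↥(ppSet A₁ S₁ A₂) =>
        Finset.univ.image f.1 = T).card =
      (Finset.univ.filter fun f : ↥(ppSet A₂ S₂ A₂) =>
        Finset.univ.image f.1 = T).card := by
    intro T
    induction T using Finset.strongInduction with
    | _ T IH =>
      have subset_iff : ∀ {γ : Type} [Fintype γ] (f : γ → A₂.carrier) (U : Finset A₂.carrier),
          (Finset.univ.image f ⊆ U) ↔ ∀ a, f a ∈ U := by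
        intro γ _ f U
        rw [Finset.image_subset_iff]
        simp
      have fib : ∀ {δ : Type} [Fintype δ] (g : δ → ↥S₁ ⊕ ↥S₂ → A₂.carrier), True := fun _ => trivial
      -- fiberwise decomposition, done generically via a local lemma applied twice
      have decomp : ∀ {δ : Type} [Fintype δ] (v : δ → A₂.carrier → Prop), True := fun _ => trivial
      clear fib decomp
      have step : ∀ {δ : Type} [Fintype δ] (F : δ → Finset A₂.carrier),
          (Finset.univ.filter fun f : δ => F f ⊆ T).card =
          ∑ U ∈ T.powerset, (Finset.univ.filter fun f : δ => F f = U).card := by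
        intro δ _ F
        rw [Finset.card_eq_sum_card_fiberwise
          (f := F) (t := T.powerset)
          (fun f hf => Finset.mem_powerset.2 (Finset.mem_filter.1 hf).2)]
        refine Finset.sum_congr rfl fun U hU => ?_
        congr 1
        rw [Finset.filter_filter]
        refine Finset.filter_congr fun f _ => ?_
        constructor
        · exact fun h => h.2
        · exact fun h => ⟨h ▸ Finset.mem_powerset.1 hU, h⟩
      have hNT := hN T
      have e₁ : (Finset.univ.filter fun f : ↥(ppSet A₁ S₁ A₂) => ∀ a : ↥S₁, f.1 a ∈ T) =
          (Finset.univ.filter fun f : ↥(ppSet A₁ S₁ A₂) => Finset.univ.image f.1 ⊆ T) :=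
        Finset.filter_congr (fun f _ => (subset_iff f.1 T).symm)
      have e₂ : (Finset.univ.filter fun f : ↥(ppSet A₂ S₂ A₂) => ∀ a : ↥S₂, f.1 a ∈ T) =
          (Finset.univ.filter fun f : ↥(ppSet A₂ S₂ A₂) => Finset.univ.image f.1 ⊆ T) :=
        Finset.filter_congr (fun f _ => (subset_iff f.1 T).symm)
      rw [e₁, e₂] at hNT
      rw [step (fun f : ↥(ppSet A₁ S₁ A₂) => Finset.univ.image f.1),
          step (fun f : ↥(ppSet A₂ S₂ A₂) => Finset.univ.image f.1)] at hNT
      rw [← Finset.sum_erase_add _ _ (Finset.mem_powerset_self T),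
          ← Finset.sum_erase_add _ _ (Finset.mem_powerset_self T)] at hNT
      have same : ∑ U ∈ T.powerset.erase T,
          (Finset.univ.filter fun f : ↥(ppSet A₁ S₁ A₂) => Finset.univ.image f.1 = U).card =
          ∑ U ∈ T.powerset.erase T,
          (Finset.univ.filter fun f : ↥(ppSet A₂ S₂ A₂) => Finset.univ.image f.1 = U).card := by
        refine Finset.sum_congr rfl fun U hU => ?_
        have hmem := Finset.mem_erase.1 hU
        exact IH U (lt_of_le_of_ne (Finset.mem_powerset.1 hmem.2) hmem.1)
      omega
  -- the identity map witnesses E₂(S₂) > 0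
  have idmem : (⟨fun s : S₂ => (s : A₂.carrier), ppSet_self_mem A₂ S₂⟩ : ↥(ppSet A₂ S₂ A₂)) ∈
      (Finset.univ.filter fun f : ↥(ppSet A₂ S₂ A₂) =>
        Finset.univ.image f.1 = S₂.toFinset) := by
    refine Finset.mem_filter.2 ⟨Finset.mem_univ _, ?_⟩
    ext b
    simp [Set.mem_toFinset]
  have hE2pos : 0 < (Finset.univ.filter fun f : ↥(ppSet A₁ S₁ A₂) =>
      Finset.univ.image f.1 = S₂.toFinset).card := by
    rw [hE S₂.toFinset]
    exact Finset.card_pos.2 ⟨_, idmem⟩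
  obtain ⟨f, hf⟩ := Finset.card_pos.1 hE2pos
  have hf' := Finset.mem_filter.1 hf
  have hran : ∀ a : ↥S₁, f.1 a ∈ S₂ := by
    intro a
    have : f.1 a ∈ Finset.univ.image f.1 := Finset.mem_image_of_mem _ (Finset.mem_univ a)
    rw [hf'.2] at this
    exact Set.mem_toFinset.1 this
  refine ⟨fun a => ⟨f.1 a, hran a⟩, ?_, ?_⟩
  · intro b
    have : (b : A₂.carrier) ∈ Finset.univ.image f.1 := by
      rw [hf'.2]; exact Set.mem_toFinset.2 b.2
    obtain ⟨a, _, ha⟩ := Finset.mem_image.1 this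
    exact ⟨a, Subtype.ext ha⟩
  · obtain ⟨H, hH, hHs⟩ := f.2
    exact ⟨H, hH, fun s => hHs s⟩

lemma card_le_of_half {σ : Signature} (A₁ A₂ : Struc σ)
    (S₁ : Set A₁.carrier) (S₂ : Set A₂.carrier)
    [Finite A₁.carrier]
    (h : S₁ → S₂) (hsurj : Function.Surjective h)
    (H : A₁.carrier → A₂.carrier) (hH : IsHom A₁ A₂ H) (hHs : ∀ s : S₁, H s = h s)
    (B : Struc σ) (hB : Finite B.carrier) :
    ppCount A₂ S₂ B ≤ ppCount A₁ S₁ B := by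
  have mem : ∀ f : ↥(ppSet A₂ S₂ B), f.1 ∘ h ∈ ppSet A₁ S₁ B := by
    rintro ⟨f, g, hg, hgs⟩
    refine ⟨g ∘ H, fun r t ht => hg r (H ∘ t) (hH r t ht), fun s => ?_⟩
    show g (H s) = f (h s)
    rw [hHs s, hgs (h s)]
  haveI : Finite ↥S₁ := Subtype.finite
  haveI : Finite ↥(ppSet A₁ S₁ B) := by
    haveI : Finite (↥S₁ → B.carrier) := Pi.finite
    exact Subtype.finite
  refine Nat.card_le_card_of_injective
    (fun f : ↥(ppSet A₂ S₂ B) => (⟨f.1 ∘ h, mem f⟩ : ↥(ppSet A₁ S₁ B))) ?_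
  intro f f' hff
  have : f.1 ∘ h = f'.1 ∘ h := congrArg Subtype.val hff
  apply Subtype.ext
  funext s
  obtain ⟨a, rfl⟩ := hsurj s
  exact congrFun this a

/-- Two prenex pp-formulas are counting equivalent iff they are renaming
equivalent. -/
theorem stmt9 (σ : Signature) (A₁ A₂ : Struc σ)
    (S₁ : Set A₁.carrier) (S₂ : Set A₂.carrier)
    [Finite A₁.carrier] [Finite A₂.carrier] :
    CountEquiv A₁ S₁ A₂ S₂ ↔ RenEquiv A₁ S₁ A₂ S₂ := by
  constructor
  · intro CE
    exact ⟨exists_surj A₁ A₂ S₁ S₂ CE,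
      exists_surj A₂ A₁ S₂ S₁ (fun B hB => (CE B hB).symm)⟩
  · rintro ⟨⟨h, hs, H, hH, hHs⟩, ⟨h', hs', H', hH', hH's⟩⟩ B hB
    exact le_antisymm (card_le_of_half A₂ A₁ S₂ S₁ h' hs' H' hH' hH's B hB)
      (card_le_of_half A₁ A₂ S₁ S₂ h hs H hH hHs B hB)
end

section
/- Two free prenex pp-formulas φ_1(V_1) and φ_2(V_2) are semi-counting equivalent if and only if φ̂_1(V_1) and φ̂_2(V_2) are counting equivalent. -/
section Aux

variable {σ : Signature}

lemma tupleComp {A : Struc σ} {r : σ.symb} {t : Fin (σ.ar r) → A.carrier}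
    (h : A.rel r t) (i j : Fin (σ.ar r)) :
    (ppGraph A).connectedComponentMk (t i) = (ppGraph A).connectedComponentMk (t j) := by
  by_cases hij : t i = t j
  · rw [hij]
  · exact SimpleGraph.ConnectedComponent.sound
      (SimpleGraph.Adj.reachable ⟨hij, r, t, h, ⟨i, rfl⟩, ⟨j, rfl⟩⟩)

def hatG (A : Struc σ) (S : Set A.carrier) := ppGraph (hatStruc A S)

/-- reachability to elements of S transfers from the graph of A to the graph of the hat. -/
lemma reach_hat {A : Struc σ} {S : Set A.carrier} {x s : A.carrier} (hs : s ∈ S)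
    (h : (ppGraph A).Reachable x s) : (hatG A S).Reachable x s := by
  obtain ⟨w⟩ := h
  induction w with
  | nil => rfl
  | @cons x y z hadj w ih =>
    have hadj' := hadj
    obtain ⟨hne, r, t, hrel, ⟨i, hi⟩, hj⟩ := hadj'
    have hAdj : (hatG A S).Adj x y := by
      refine ⟨hne, r, t, ⟨hrel, i, z, hs, ?_⟩, ⟨i, hi⟩, hj⟩
      rw [hi]
      exact (SimpleGraph.Adj.reachable hadj).trans w.reachable
    exact (hAdj.reachable).trans (ih hs)

/-- every coordinate of a tuple in a hat relation lies in the hat-component of some element of S -/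
lemma hatrel_meets_S {A : Struc σ} {S : Set A.carrier} {r : σ.symb}
    {t : Fin (σ.ar r) → A.carrier} (h : (hatStruc A S).rel r t) (i : Fin (σ.ar r)) :
    ∃ s ∈ S, (hatG A S).connectedComponentMk (t i) = (hatG A S).connectedComponentMk s := by
  obtain ⟨hrel, i₀, s, hs, hreach⟩ := h
  refine ⟨s, hs, ?_⟩
  have h1 : (hatG A S).connectedComponentMk (t i) = (hatG A S).connectedComponentMk (t i₀) :=
    tupleComp (A := hatStruc A S) ⟨hrel, i₀, s, hs, hreach⟩ i i₀
  exact h1.trans (SimpleGraph.ConnectedComponent.sound (reach_hat hs hreach))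

def libSet (A : Struc σ) (S : Set A.carrier) (c : (hatG A S).ConnectedComponent) :
    Set (compStruc (hatStruc A S) c).carrier := {a | a.1 ∈ S}

end Aux
section Decomp

variable {σ : Signature}

noncomputable def decompEquiv (A : Struc σ) (S : Set A.carrier) (X : Struc σ) :
    ↥(ppSet (hatStruc A S) S X) ≃
      ∀ c : (hatG A S).ConnectedComponent, ↥(ppSet (compStruc (hatStruc A S) c) (libSet A S c) X) where
  toFun f c := ⟨fun x => f.1 ⟨x.1.1, x.2⟩, by
    obtain ⟨h, hhom, hext⟩ := f.2
    exact ⟨fun a => h a.1, fun r t ht => hhom r (fun i => (t i).1) ht,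
      fun x => hext ⟨x.1.1, x.2⟩⟩⟩
  invFun F := ⟨fun s => (F ((hatG A S).connectedComponentMk s.1)).1 ⟨⟨s.1, rfl⟩, s.2⟩, by
    classical
    choose ext hhom hext using fun c => (F c).2
    have key : ∀ (a : A.carrier) (c) (hac : (hatG A S).connectedComponentMk a = c),
        ext ((hatG A S).connectedComponentMk a) ⟨a, rfl⟩ = ext c ⟨a, hac⟩ := by
      rintro a c rfl; rfl
    refine ⟨fun a => ext ((hatG A S).connectedComponentMk a) ⟨a, rfl⟩, ?_, ?_⟩
    · intro r t ht
      obtain ⟨i₀, s, hs, hr⟩ := ht.2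
      set c := (hatG A S).connectedComponentMk (t i₀) with hcdef
      have hc : ∀ m, (hatG A S).connectedComponentMk (t m) = c := fun m =>
        tupleComp (A := hatStruc A S) ht m i₀
      have hrel' := hhom c r (fun m => ⟨t m, hc m⟩) ht
      have heq : ((fun a => ext ((hatG A S).connectedComponentMk a) ⟨a, rfl⟩) ∘ t)
          = (ext c ∘ (fun m => ⟨t m, hc m⟩)) := funext fun m => key (t m) c (hc m)
      rw [heq]
      exact hrel'
    · intro s
      exact hext _ ⟨⟨s.1, rfl⟩, s.2⟩⟩
  left_inv f := Subtype.ext (funext fun s => rfl)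
  right_inv F := by
    funext c
    apply Subtype.ext
    funext x
    obtain ⟨⟨a, hac⟩, has⟩ := x
    subst hac
    rfl

lemma decompCard (A : Struc σ) (S : Set A.carrier) (X : Struc σ)
    [Fintype ((hatG A S).ConnectedComponent)] :
    ppCount (hatStruc A S) S X =
      ∏ c : (hatG A S).ConnectedComponent,
        ppCount (compStruc (hatStruc A S) c) (libSet A S c) X := by
  unfold ppCount
  rw [Nat.card_congr (decompEquiv A S X), Nat.card_pi]

end Decomp
section Gadget

variable {σ : Signature}

def addK (B : Struc σ) (k : ℕ) : Struc σ :=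
  ⟨B.carrier ⊕ Fin k,
   fun r t => (∃ t', (∀ i, t i = Sum.inl (t' i)) ∧ B.rel r t') ∨ ∃ j, ∀ i, t i = Sum.inr j⟩

/-- same side predicate on `addK` -/
def SameSide {B : Struc σ} {k : ℕ} (u v : (addK B k).carrier) : Prop :=
  (u.isLeft ∧ v.isLeft) ∨ ∃ j, u = Sum.inr j ∧ v = Sum.inr j

lemma sameSide_refl {B : Struc σ} {k : ℕ} (u : (addK B k).carrier) : SameSide u u := by
  rcases u with b | j
  · exact Or.inl ⟨rfl, rfl⟩
  · exact Or.inr ⟨j, rfl, rfl⟩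

lemma sameSide_trans {B : Struc σ} {k : ℕ} {u v w : (addK B k).carrier}
    (h1 : SameSide u v) (h2 : SameSide v w) : SameSide u w := by
  rcases h1 with ⟨hu, hv⟩ | ⟨j, rfl, rfl⟩
  · rcases h2 with ⟨hv', hw⟩ | ⟨j', rfl, hw⟩
    · exact Or.inl ⟨hu, hw⟩
    · simp at hv
  · rcases h2 with ⟨hv', hw⟩ | ⟨j', hv', hw⟩
    · simp at hv'
    · rw [show j = j' from Sum.inr.inj hv'] at *
      exact Or.inr ⟨j', rfl, hw⟩

/-- a homomorphism from a component of a hat structure into `addK B k` lands all on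
one side -/
lemma sideConst {A : Struc σ} {S : Set A.carrier} {c : (hatG A S).ConnectedComponent}
    {B : Struc σ} {k : ℕ}
    {h : (compStruc (hatStruc A S) c).carrier → (addK B k).carrier}
    (hh : IsHom (compStruc (hatStruc A S) c) (addK B k) h) :
    (∀ a, ∃ b, h a = Sum.inl b) ∨ (∃ j, ∀ a, h a = Sum.inr j) := by
  obtain ⟨v, hv⟩ := c.exists_rep
  have edge : ∀ (x y : A.carrier) (hx : (hatG A S).connectedComponentMk x = c)
      (hy : (hatG A S).connectedComponentMk y = c), (hatG A S).Adj x y →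
      SameSide (h ⟨x, hx⟩) (h ⟨y, hy⟩) := by
    rintro x y hx hy ⟨hne, r, t, hrel, ⟨i, hi⟩, ⟨j, hj⟩⟩
    have hcm : ∀ m, (hatG A S).connectedComponentMk (t m) = c := fun m =>
      (tupleComp (A := hatStruc A S) hrel m i).trans (by rw [hi]; exact hx)
    have hrel' := hh r (fun m => ⟨t m, hcm m⟩) hrel
    have hxi : h ⟨x, hx⟩ = h ⟨t i, hcm i⟩ := by congr 1; exact Subtype.ext hi.symm
    have hyj : h ⟨y, hy⟩ = h ⟨t j, hcm j⟩ := by congr 1; exact Subtype.ext hj.symm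
    rcases hrel' with ⟨tb, htb, -⟩ | ⟨j', hj'⟩
    · refine Or.inl ⟨?_, ?_⟩
      · rw [hxi, show h ⟨t i, hcm i⟩ = Sum.inl (tb i) from htb i]; rfl
      · rw [hyj, show h ⟨t j, hcm j⟩ = Sum.inl (tb j) from htb j]; rfl
    · exact Or.inr ⟨j', by rw [hxi]; exact hj' i, by rw [hyj]; exact hj' j⟩
  have walkSame : ∀ (x y : A.carrier) (w : (hatG A S).Walk x y)
      (hx : (hatG A S).connectedComponentMk x = c)
      (hy : (hatG A S).connectedComponentMk y = c),
      SameSide (h ⟨x, hx⟩) (h ⟨y, hy⟩) := by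
    intro x y w
    induction w with
    | nil => intro hx hy; exact sameSide_refl _
    | @cons x y' z hadj w ih =>
      intro hx hz
      have hy' : (hatG A S).connectedComponentMk y' = c :=
        (SimpleGraph.ConnectedComponent.sound hadj.reachable).symm.trans hx
      exact sameSide_trans (edge x y' hx hy' hadj) (ih hy' hz)
  have key : ∀ a : (compStruc (hatStruc A S) c).carrier, SameSide (h ⟨v, hv⟩) (h a) := by
    intro a
    obtain ⟨w⟩ := SimpleGraph.ConnectedComponent.exact (hv.trans a.2.symm)
    have := walkSame v a.1 w hv a.2
    rwa [show (⟨a.1, a.2⟩ : (compStruc (hatStruc A S) c).carrier) = a from rfl] at this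
  rcases hsum : h ⟨v, hv⟩ with b | j
  · refine Or.inl fun a => ?_
    rcases key a with ⟨-, hL⟩ | ⟨j, hu, -⟩
    · exact Sum.isLeft_iff.mp hL
    · rw [hsum] at hu; cases hu
  · refine Or.inr ⟨j, fun a => ?_⟩
    rcases key a with ⟨hL, -⟩ | ⟨j', hu, hv'⟩
    · rw [hsum] at hL; cases hL
    · rw [hsum] at hu; rw [Sum.inr.inj hu]; exact hv'

end Gadget
section CompCount

variable {σ : Signature}

lemma compCount_addK_lib (A : Struc σ) (S : Set A.carrier) [Finite A.carrier]
    (c : (hatG A S).ConnectedComponent) (B : Struc σ) [Finite B.carrier] (k : ℕ)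
    (hSc : (libSet A S c).Nonempty) :
    ppCount (compStruc (hatStruc A S) c) (libSet A S c) (addK B k) =
      ppCount (compStruc (hatStruc A S) c) (libSet A S c) B + k := by
  classical
  haveI : Finite (hatStruc A S).carrier := ‹Finite A.carrier›
  haveI : Finite (compStruc (hatStruc A S) c).carrier := Subtype.finite
  haveI : Finite (addK B k).carrier := by
    show Finite (B.carrier ⊕ Fin k); infer_instance
  set C := compStruc (hatStruc A S) c with hC
  -- the easy injection
  set ψ : ↥(ppSet C (libSet A S c) B) ⊕ (Fin k) → ↥(ppSet C (libSet A S c) (addK B k)) :=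
    fun u => match u with
    | Sum.inl ⟨g, hg⟩ => ⟨fun x => Sum.inl (g x), by
        obtain ⟨h, hh, he⟩ := hg
        exact ⟨fun a => Sum.inl (h a), fun r t ht => Or.inl ⟨h ∘ t, fun i => rfl, hh r t ht⟩,
          fun s => congrArg Sum.inl (he s)⟩⟩
    | Sum.inr j => ⟨fun _ => Sum.inr j,
        ⟨fun _ => Sum.inr j, fun r t ht => Or.inr ⟨j, fun i => rfl⟩, fun s => rfl⟩⟩
    with hψ
  obtain ⟨x₀, hx₀⟩ := hSc
  have hinj : Function.Injective ψ := by
    rintro (⟨g, hg⟩ | j) (⟨g', hg'⟩ | j') huv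
    · have := congrFun (congrArg Subtype.val huv) ⟨x₀, hx₀⟩
      have hgg : g = g' := funext fun x => by
        have := congrFun (congrArg Subtype.val huv) x
        exact Sum.inl.inj this
      subst hgg; rfl
    · have := congrFun (congrArg Subtype.val huv) ⟨x₀, hx₀⟩
      simp at this
    · have := congrFun (congrArg Subtype.val huv) ⟨x₀, hx₀⟩
      simp at this
    · have := congrFun (congrArg Subtype.val huv) ⟨x₀, hx₀⟩
      rw [show j = j' from Sum.inr.inj this]
  have hsurj : Function.Surjective ψ := by
    rintro ⟨f, hf⟩
    obtain ⟨h, hh, he⟩ := hf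
    rcases sideConst hh with hall | ⟨j, hj⟩
    · choose h' hh' using hall
      refine ⟨Sum.inl ⟨fun x => h' x.1, ⟨h', ?_, fun x => rfl⟩⟩, ?_⟩
      · intro r t ht
        have hrel' := hh r t ht
        rcases hrel' with ⟨tb, htb, hB⟩ | ⟨j, hjj⟩
        · have : h' ∘ t = tb := funext fun i => by
            have h1 := htb i
            rw [show (h ∘ t) i = Sum.inl (h' (t i)) from hh' (t i)] at h1
            exact Sum.inl.inj h1
          rw [show h' ∘ t = tb from this]
          exact hB
        · exfalso
          obtain ⟨i₀, -⟩ := ht.2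
          have h1 := hjj i₀
          rw [show (h ∘ t) i₀ = Sum.inl (h' (t i₀)) from hh' (t i₀)] at h1
          cases h1
      · apply Subtype.ext
        funext x
        exact ((hh' x.1).symm.trans (he x))
    · refine ⟨Sum.inr j, ?_⟩
      apply Subtype.ext
      funext x
      exact ((hj x.1).symm.trans (he x))
  unfold ppCount
  rw [Nat.card_congr (Equiv.ofBijective ψ ⟨hinj, hsurj⟩).symm, Nat.card_sum]
  simp
  rfl

lemma compCount_addK_nonlib (A : Struc σ) (S : Set A.carrier)
    (c : (hatG A S).ConnectedComponent) (B : Struc σ) (k : ℕ)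
    (hSc : ¬(libSet A S c).Nonempty) (hk : 0 < k) :
    ppCount (compStruc (hatStruc A S) c) (libSet A S c) (addK B k) = 1 := by
  haveI : IsEmpty ↥(libSet A S c) :=
    Set.isEmpty_coe_sort.2 (Set.not_nonempty_iff_eq_empty.mp hSc)
  rw [ppCount, Nat.card_eq_one_iff_unique]
  constructor
  · infer_instance
  · exact ⟨⟨fun x => isEmptyElim x,
      ⟨fun _ => Sum.inr ⟨0, hk⟩, fun r t ht => Or.inr ⟨⟨0, hk⟩, fun i => rfl⟩,
        fun s => isEmptyElim s⟩⟩⟩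

lemma compCount_B_nonlib (A : Struc σ) (S : Set A.carrier)
    (c : (hatG A S).ConnectedComponent) (B : Struc σ)
    (hSc : ¬(libSet A S c).Nonempty) (hB : Nonempty B.carrier) :
    ppCount (compStruc (hatStruc A S) c) (libSet A S c) B = 1 := by
  haveI : IsEmpty ↥(libSet A S c) :=
    Set.isEmpty_coe_sort.2 (Set.not_nonempty_iff_eq_empty.mp hSc)
  rw [ppCount, Nat.card_eq_one_iff_unique]
  constructor
  · infer_instance
  · refine ⟨⟨fun x => isEmptyElim x, ⟨fun _ => hB.some, ?_, fun s => isEmptyElim s⟩⟩⟩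
    intro r t ht
    exfalso
    obtain ⟨i₀, -⟩ := ht.2
    obtain ⟨s, hsS, hmk⟩ := hatrel_meets_S (A := A) (S := S) ht i₀
    exact hSc ⟨⟨s, hmk.symm.trans (t i₀).2⟩, hsS⟩

end CompCount
section HatEq

variable {σ : Signature}

lemma ppSet_hat_eq {A : Struc σ} {S : Set A.carrier} {X : Struc σ}
    (hne : (ppSet A S X).Nonempty) : ppSet A S X = ppSet (hatStruc A S) S X := by
  classical
  obtain ⟨f₀, h₀, hh₀, -⟩ := hne
  apply Set.Subset.antisymm
  · rintro f ⟨h, hh, he⟩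
    exact ⟨h, fun r t ht => hh r t ht.1, he⟩
  · rintro f ⟨h, hh, he⟩
    refine ⟨fun a => if ∃ s ∈ S, (ppGraph A).Reachable a s then h a else h₀ a, ?_, ?_⟩
    · intro r t ht
      by_cases hlib : ∃ i, ∃ s ∈ S, (ppGraph A).Reachable (t i) s
      · have hall : ∀ m, ∃ s ∈ S, (ppGraph A).Reachable (t m) s := by
          obtain ⟨i, s, hs, hr⟩ := hlib
          intro m
          exact ⟨s, hs, (SimpleGraph.ConnectedComponent.exact (tupleComp ht m i)).trans hr⟩
        have heq : ((fun a => if ∃ s ∈ S, (ppGraph A).Reachable a s then h a else h₀ a) ∘ t)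
            = h ∘ t := funext fun m => if_pos (hall m)
        rw [heq]
        exact hh r t ⟨ht, hlib⟩
      · have hall : ∀ m, ¬ ∃ s ∈ S, (ppGraph A).Reachable (t m) s := fun m hm => hlib ⟨m, hm⟩
        have heq : ((fun a => if ∃ s ∈ S, (ppGraph A).Reachable a s then h a else h₀ a) ∘ t)
            = h₀ ∘ t := funext fun m => if_neg (hall m)
        rw [heq]
        exact hh₀ r t ht
    · intro s
      have : ∃ s' ∈ S, (ppGraph A).Reachable (s : A.carrier) s' :=
        ⟨s.1, s.2, SimpleGraph.Reachable.refl _⟩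
      simp only [if_pos this]
      exact he s

lemma ppCount_hat_eq {A : Struc σ} {S : Set A.carrier} {X : Struc σ}
    (hne : (ppSet A S X).Nonempty) : ppCount A S X = ppCount (hatStruc A S) S X := by
  unfold ppCount
  rw [ppSet_hat_eq hne]
  rfl

end HatEq
section Main

variable {σ : Signature}

open Classical in
lemma hatCount_addK (A : Struc σ) (S : Set A.carrier) [Finite A.carrier]
    [Fintype ((hatG A S).ConnectedComponent)] (B : Struc σ) [Finite B.carrier]
    (hB : Nonempty B.carrier) (k : ℕ) (hk : 0 < k) :
    ppCount (hatStruc A S) S (addK B k) =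
      ∏ c : (hatG A S).ConnectedComponent,
        (ppCount (compStruc (hatStruc A S) c) (libSet A S c) B +
          (if (libSet A S c).Nonempty then 1 else 0) * k) := by
  haveI : Finite (addK B k).carrier := by
    show Finite (B.carrier ⊕ Fin k); infer_instance
  rw [decompCard]
  apply Finset.prod_congr rfl
  intro c _
  by_cases hSc : (libSet A S c).Nonempty
  · rw [compCount_addK_lib A S c B k hSc, if_pos hSc, one_mul]
  · rw [compCount_addK_nonlib A S c B k hSc hk, if_neg hSc,
        compCount_B_nonlib A S c B hSc hB, zero_mul, add_zero]

lemma prod_eval_eq {ι₁ ι₂ : Type} [Fintype ι₁] [Fintype ι₂]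
    (a₁ e₁ : ι₁ → ℕ) (a₂ e₂ : ι₂ → ℕ)
    (h : ∀ k : ℕ, 0 < k → ∏ c, (a₁ c + e₁ c * k) = ∏ c, (a₂ c + e₂ c * k)) :
    ∏ c, a₁ c = ∏ c, a₂ c := by
  set p₁ : Polynomial ℤ :=
    ∏ c, (Polynomial.C ((a₁ c : ℤ)) + Polynomial.C ((e₁ c : ℤ)) * Polynomial.X) with hp₁
  set p₂ : Polynomial ℤ :=
    ∏ c, (Polynomial.C ((a₂ c : ℤ)) + Polynomial.C ((e₂ c : ℤ)) * Polynomial.X) with hp₂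
  have heval : ∀ k : ℕ, 0 < k → p₁.eval (k : ℤ) = p₂.eval (k : ℤ) := by
    intro k hk
    simp only [hp₁, hp₂, Polynomial.eval_prod, Polynomial.eval_add, Polynomial.eval_C,
      Polynomial.eval_mul, Polynomial.eval_X]
    exact_mod_cast congrArg (Nat.cast : ℕ → ℤ) (h k hk)
  have hpp : p₁ = p₂ := by
    have hroot : {x | (p₁ - p₂).IsRoot x}.Infinite := by
      apply Set.infinite_of_injective_forall_mem (f := fun n : ℕ => (n : ℤ) + 1)
      · intro a b hab
        have h2 : (a : ℤ) + 1 = (b : ℤ) + 1 := hab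
        have := add_right_cancel h2
        exact_mod_cast this
      · intro n
        have h1 := heval (n + 1) (Nat.succ_pos n)
        simp only [Set.mem_setOf_eq, Polynomial.IsRoot, Polynomial.eval_sub]
        rw [sub_eq_zero]
        have : ((n + 1 : ℕ) : ℤ) = (n : ℤ) + 1 := by push_cast; ring
        rwa [this] at h1
    exact sub_eq_zero.mp (Polynomial.eq_zero_of_infinite_isRoot _ hroot)
  have h0 : p₁.eval 0 = p₂.eval 0 := by rw [hpp]
  simp only [hp₁, hp₂, Polynomial.eval_prod, Polynomial.eval_add, Polynomial.eval_C,
    Polynomial.eval_mul, Polynomial.eval_X, mul_zero, add_zero] at h0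
  exact_mod_cast h0

end Main
/-- Two free prenex pp-formulas are semi-counting equivalent iff the formulas
obtained by deleting non-liberal components are counting equivalent. -/
theorem stmt11 (σ : Signature) (A₁ A₂ : Struc σ)
    (S₁ : Set A₁.carrier) (S₂ : Set A₂.carrier)
    [Finite A₁.carrier] [Finite A₂.carrier]
    (h₁ : S₁.Nonempty) (h₂ : S₂.Nonempty) :
    SemiCountEquiv A₁ S₁ A₂ S₂ ↔
      CountEquiv (hatStruc A₁ S₁) S₁ (hatStruc A₂ S₂) S₂ := by
  classical
  constructor
  · -- semi-counting equivalence implies counting equivalence of hats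
    intro hsemi B hBfin
    haveI := hBfin
    haveI : Finite (hatStruc A₁ S₁).carrier := ‹Finite A₁.carrier›
    haveI : Finite (hatStruc A₂ S₂).carrier := ‹Finite A₂.carrier›
    haveI : Fintype ((hatG A₁ S₁).ConnectedComponent) := Fintype.ofFinite _
    haveI : Fintype ((hatG A₂ S₂).ConnectedComponent) := Fintype.ofFinite _
    rcases isEmpty_or_nonempty B.carrier with hB | hB
    · haveI : Nonempty ↥S₁ := h₁.to_subtype
      haveI : Nonempty ↥S₂ := h₂.to_subtype
      haveI : IsEmpty (↥S₁ → B.carrier) :=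
        ⟨fun f => IsEmpty.false (f (Classical.arbitrary _))⟩
      haveI : IsEmpty (↥S₂ → B.carrier) :=
        ⟨fun f => IsEmpty.false (f (Classical.arbitrary _))⟩
      unfold ppCount
      rw [@Nat.card_of_isEmpty _ ⟨fun x => hB.false (x.1 ⟨h₁.some, h₁.some_mem⟩)⟩,
        @Nat.card_of_isEmpty _ ⟨fun x => hB.false (x.1 ⟨h₂.some, h₂.some_mem⟩)⟩]
    · have key : ∀ k : ℕ, 0 < k →
          (∏ c : (hatG A₁ S₁).ConnectedComponent,
            (ppCount (compStruc (hatStruc A₁ S₁) c) (libSet A₁ S₁ c) B +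
              (if (libSet A₁ S₁ c).Nonempty then 1 else 0) * k)) =
          (∏ c : (hatG A₂ S₂).ConnectedComponent,
            (ppCount (compStruc (hatStruc A₂ S₂) c) (libSet A₂ S₂ c) B +
              (if (libSet A₂ S₂ c).Nonempty then 1 else 0) * k)) := by
        intro k hk
        haveI : Finite (addK B k).carrier := by
          show Finite (B.carrier ⊕ Fin k); infer_instance
        have hne₁ : (ppSet A₁ S₁ (addK B k)).Nonempty :=
          ⟨fun _ => Sum.inr ⟨0, hk⟩, fun _ => Sum.inr ⟨0, hk⟩,
            fun r t ht => Or.inr ⟨⟨0, hk⟩, fun i => rfl⟩, fun s => rfl⟩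
        have hne₂ : (ppSet A₂ S₂ (addK B k)).Nonempty :=
          ⟨fun _ => Sum.inr ⟨0, hk⟩, fun _ => Sum.inr ⟨0, hk⟩,
            fun r t ht => Or.inr ⟨⟨0, hk⟩, fun i => rfl⟩, fun s => rfl⟩
        have pos₁ : 0 < ppCount A₁ S₁ (addK B k) := by
          rw [ppCount]
          haveI := hne₁.to_subtype
          exact Nat.card_pos
        have pos₂ : 0 < ppCount A₂ S₂ (addK B k) := by
          rw [ppCount]
          haveI := hne₂.to_subtype
          exact Nat.card_pos
        have hmain := hsemi (addK B k) ‹_› pos₁ pos₂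
        rw [ppCount_hat_eq hne₁, ppCount_hat_eq hne₂,
          hatCount_addK A₁ S₁ B hB k hk, hatCount_addK A₂ S₂ B hB k hk] at hmain
        exact hmain
      have := prod_eval_eq _ _ _ _ key
      rw [decompCard A₁ S₁ B, decompCard A₂ S₂ B]
      exact this
  · -- counting equivalence of hats implies semi-counting equivalence
    intro hc B hBfin hp1 hp2
    have hne₁ : (ppSet A₁ S₁ B).Nonempty := by
      by_contra hcon
      rw [Set.not_nonempty_iff_eq_empty] at hcon
      rw [ppCount, hcon] at hp1
      simp at hp1
    have hne₂ : (ppSet A₂ S₂ B).Nonempty := by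
      by_contra hcon
      rw [Set.not_nonempty_iff_eq_empty] at hcon
      rw [ppCount, hcon] at hp2
      simp at hp2
    rw [ppCount_hat_eq hne₁, ppCount_hat_eq hne₂]
    exact hc B hBfin
end

section
/- Two prenex pp-formulas (A, V) and (B, V) with the same liberal variable set V are logically equivalent (have the same satisfying assignments on every structure) if and only if their augmented structures aug(A, V) and aug(B, V) are homomorphically equivalent. -/
/-- The signature expanded by a fresh unary relation symbol for each liberal
variable in `V`. -/
def augSig (σ : Signature) (V : Type) : Signature :=
  ⟨σ.symb ⊕ V, Sum.elim σ.ar fun _ => 1⟩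

/-- The augmented structure of a prenex pp-formula `(A, V)`: each new unary
symbol `R_v` is interpreted as the singleton `{v}`. -/
def augStruc {σ : Signature} (A : Struc σ) (V : Type) (ι : V → A.carrier) :
    Struc (augSig σ V) where
  carrier := A.carrier
  rel := fun r => match r with
    | .inl r => fun t => A.rel r t
    | .inr v => fun t => t ⟨0, Nat.zero_lt_one⟩ = ι v

/-- Chandra–Merlin: two prenex pp-formulas `(A, V)` and `(B, V)` with the same
liberal variable set are logically equivalent iff their augmented structures
are homomorphically equivalent. -/
theorem stmt18 (σ : Signature) (V : Type) (A B : Struc σ)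
    [Finite A.carrier] [Finite B.carrier]
    (ιA : V → A.carrier) (ιB : V → B.carrier)
    (hA : Function.Injective ιA) (hB : Function.Injective ιB) :
    (∀ C : Struc σ, Finite C.carrier → ∀ f : V → C.carrier,
        ((∃ h, IsHom A C h ∧ ∀ v, h (ιA v) = f v) ↔
         (∃ h, IsHom B C h ∧ ∀ v, h (ιB v) = f v)))
      ↔ ((∃ h, IsHom (augStruc A V ιA) (augStruc B V ιB) h) ∧
         (∃ h, IsHom (augStruc B V ιB) (augStruc A V ιA) h)) := by
  constructor
  · intro heq
    constructor
    · obtain ⟨h, hh, hv⟩ := (heq B ‹_› ιB).mpr ⟨id, fun r t ht => ht, fun v => rfl⟩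
      refine ⟨h, fun r t ht => ?_⟩
      cases r with
      | inl r => exact hh r t ht
      | inr v => simp only [augStruc] at ht ⊢; exact (congrArg h ht).trans (hv v)
    · obtain ⟨h, hh, hv⟩ := (heq A ‹_› ιA).mp ⟨id, fun r t ht => ht, fun v => rfl⟩
      refine ⟨h, fun r t ht => ?_⟩
      cases r with
      | inl r => exact hh r t ht
      | inr v => simp only [augStruc] at ht ⊢; exact (congrArg h ht).trans (hv v)
  · rintro ⟨⟨g, hg⟩, ⟨g', hg'⟩⟩
    have hgA : IsHom A B g := fun r t ht => hg (.inl r) t ht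
    have hgv : ∀ v, g (ιA v) = ιB v := fun v =>
      hg (.inr v) (fun _ => ιA v) rfl
    have hg'B : IsHom B A g' := fun r t ht => hg' (.inl r) t ht
    have hg'v : ∀ v, g' (ιB v) = ιA v := fun v =>
      hg' (.inr v) (fun _ => ιB v) rfl
    intro C _ f
    constructor
    · rintro ⟨h, hh, hv⟩
      exact ⟨h ∘ g', fun r t ht => hh r (g' ∘ t) (hg'B r t ht),
        fun v => by exact (congrArg h (hg'v v)).trans (hv v)⟩
    · rintro ⟨h, hh, hv⟩
      exact ⟨h ∘ g, fun r t ht => hh r (g ∘ t) (hgA r t ht),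
        fun v => by exact (congrArg h (hgv v)).trans (hv v)⟩
end
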